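/- In the group G_m generated by CNOT, X, and Z_m gates on n qubits (modulo global phases ⟨ω_m⟩), the subgroup W_m of diagonal matrices and the subgroup Π of permutation matrices satisfy: W_m ∩ Π = {I}, G_m = Π·W_m, and W_m is normal in G_m; hence G_m ≅ W_m ⋊ Π. -/

import Mathlib

open scoped Matrix

/-- The CNOT gate `Λ_{ij}(X)` with control `i` and target `j`. -/
noncomputable def cnotMat (n : ℕ) (i j : Fin n) :
    Matrix (Fin n → ZMod 2) (Fin n → ZMod 2) ℂ :=
  Matrix.of fun r c => if r = Function.update c j (c i + c j) then 1 else 0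

/-- The bit-flip gate `X(j)`. -/
noncomputable def xMat (n : ℕ) (j : Fin n) :
    Matrix (Fin n → ZMod 2) (Fin n → ZMod 2) ℂ :=
  Matrix.of fun r c => if r = Function.update c j (c j + 1) then 1 else 0

/-- The single-qubit `m`-phase gate `Z_m(j)`: `|b⟩ ↦ ω_m^{b_j}|b⟩`,
`ω_m = e^{2πi/m}`. -/
noncomputable def zMat (n m : ℕ) (j : Fin n) :
    Matrix (Fin n → ZMod 2) (Fin n → ZMod 2) ℂ :=
  Matrix.diagonal fun b => Complex.exp (2 * Real.pi * Complex.I / m) ^ (b j).val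

/-- The subgroup `Π` of permutation matrices, generated by CNOT and `X` gates. -/
def permGroup (n : ℕ) : Subgroup (GL (Fin n → ZMod 2) ℂ) :=
  Subgroup.closure
    {g | (∃ i j, i ≠ j ∧
            (g : Matrix (Fin n → ZMod 2) (Fin n → ZMod 2) ℂ) = cnotMat n i j) ∨
         (∃ j, (g : Matrix (Fin n → ZMod 2) (Fin n → ZMod 2) ℂ) = xMat n j)}

/-- The CNOT-dihedral matrix group `G_m = ⟨Λ_{ij}(X), X(j), Z_m(j)⟩`. -/
def GmGroup (n m : ℕ) : Subgroup (GL (Fin n → ZMod 2) ℂ) :=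
  Subgroup.closure
    {g | (∃ i j, i ≠ j ∧
            (g : Matrix (Fin n → ZMod 2) (Fin n → ZMod 2) ℂ) = cnotMat n i j) ∨
         (∃ j, (g : Matrix (Fin n → ZMod 2) (Fin n → ZMod 2) ℂ) = xMat n j) ∨
         (∃ j, (g : Matrix (Fin n → ZMod 2) (Fin n → ZMod 2) ℂ) = zMat n m j)}

/-- The subgroup of `GL(2ⁿ, ℂ)` consisting of (invertible) diagonal matrices. -/
def diagGL (n : ℕ) : Subgroup (GL (Fin n → ZMod 2) ℂ) where
  carrier := {g | ∃ d, (g : Matrix (Fin n → ZMod 2) (Fin n → ZMod 2) ℂ) =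
    Matrix.diagonal d}
  one_mem' := ⟨fun _ => 1, by simp⟩
  mul_mem' := by
    rintro a b ⟨d, hd⟩ ⟨e, he⟩
    exact ⟨fun i => d i * e i, by
      simp [Units.val_mul, hd, he, Matrix.diagonal_mul_diagonal]⟩
  inv_mem' := by
    rintro g ⟨d, hd⟩
    have h1 : Matrix.diagonal d *
        ((g⁻¹ : GL (Fin n → ZMod 2) ℂ) :
          Matrix (Fin n → ZMod 2) (Fin n → ZMod 2) ℂ) = 1 := by
      rw [← hd, ← Units.val_mul, mul_inv_cancel, Units.val_one]
    have key : ∀ i j, d i *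
        ((g⁻¹ : GL (Fin n → ZMod 2) ℂ) :
          Matrix (Fin n → ZMod 2) (Fin n → ZMod 2) ℂ) i j =
        (1 : Matrix (Fin n → ZMod 2) (Fin n → ZMod 2) ℂ) i j := by
      intro i j
      have h2 := congrArg (fun M : Matrix (Fin n → ZMod 2) (Fin n → ZMod 2) ℂ
        => M i j) h1
      simpa [Matrix.diagonal_mul] using h2
    refine ⟨fun i => (d i)⁻¹, ?_⟩
    ext i j
    by_cases hij : i = j
    · subst hij
      have hii := key i i
      rw [Matrix.one_apply_eq] at hii
      simp [Matrix.diagonal_apply_eq, eq_inv_of_mul_eq_one_right hii]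
    · have hij' := key i j
      rw [Matrix.one_apply_ne hij] at hij'
      have hdne : d i ≠ 0 := by
        intro h0
        have hii := key i i
        rw [Matrix.one_apply_eq, h0, zero_mul] at hii
        exact zero_ne_one hii
      rcases mul_eq_zero.mp hij' with h | h
      · exact absurd h hdne
      · simp [Matrix.diagonal_apply_ne _ hij, h]

/-- The subgroup `W_m` of diagonal matrices of `G_m`. -/
def WmGroup (n m : ℕ) : Subgroup (GL (Fin n → ZMod 2) ℂ) := diagGL n ⊓ GmGroup n m


namespace GmAux

noncomputable def pMat {ι : Type*} [DecidableEq ι] (σ : Equiv.Perm ι) : Matrix ι ι ℂ :=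
  Matrix.of fun r c => if r = σ c then 1 else 0

theorem pMat_mul {ι : Type*} [Fintype ι] [DecidableEq ι] (σ τ : Equiv.Perm ι) :
    pMat σ * pMat τ = pMat (σ * τ) := by
  ext r c
  simp [pMat, Matrix.mul_apply, Finset.sum_ite_eq, eq_comm]
  congr

theorem pMat_one {ι : Type*} [Fintype ι] [DecidableEq ι] : (pMat 1 : Matrix ι ι ℂ) = 1 := by
  ext r c
  simp [pMat, Matrix.one_apply, eq_comm]
  congr

theorem pMat_mul_diag {ι : Type*} [Fintype ι] [DecidableEq ι] (σ : Equiv.Perm ι) (d : ι → ℂ) :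
    pMat σ * Matrix.diagonal d = Matrix.diagonal (d ∘ σ.symm) * pMat σ := by
  ext r c
  by_cases h : r = σ c <;>
    simp [pMat, Matrix.mul_apply, Matrix.diagonal, h, Finset.sum_ite_eq]

theorem zmod2_add_self : ∀ a : ZMod 2, a + a = 0 := by decide

theorem cnot_invol (n : ℕ) (i j : Fin n) (h : i ≠ j) :
    Function.Involutive (fun c : Fin n → ZMod 2 => Function.update c j (c i + c j)) := by
  intro c
  simp only [Function.update_self, Function.update_of_ne h]
  rw [Function.update_idem]
  have : c i + (c i + c j) = c j := by
    rw [← add_assoc, zmod2_add_self, zero_add]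
  rw [this, Function.update_eq_self]

theorem x_invol (n : ℕ) (j : Fin n) :
    Function.Involutive (fun c : Fin n → ZMod 2 => Function.update c j (c j + 1)) := by
  intro c
  simp only [Function.update_self]
  rw [Function.update_idem]
  have : c j + 1 + 1 = c j := by
    rw [add_assoc, zmod2_add_self (1 : ZMod 2), add_zero]
  rw [this, Function.update_eq_self]

theorem cnotMat_eq_pMat (n : ℕ) (i j : Fin n) (h : i ≠ j) :
    cnotMat n i j = pMat (cnot_invol n i j h).toPerm := rfl

theorem xMat_eq_pMat (n : ℕ) (j : Fin n) :
    xMat n j = pMat (x_invol n j).toPerm := rfl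

theorem val_inv_eq_pMat {n : ℕ} (g : GL (Fin n → ZMod 2) ℂ) (σ : Equiv.Perm (Fin n → ZMod 2))
    (h : (g : Matrix (Fin n → ZMod 2) (Fin n → ZMod 2) ℂ) = pMat σ) :
    ((g⁻¹ : GL (Fin n → ZMod 2) ℂ) : Matrix (Fin n → ZMod 2) (Fin n → ZMod 2) ℂ) = pMat σ⁻¹ := by
  have h1 : (g : Matrix (Fin n → ZMod 2) (Fin n → ZMod 2) ℂ) * pMat σ⁻¹ = 1 := by
    rw [h, pMat_mul, mul_inv_cancel, pMat_one]
  calc ((g⁻¹ : GL (Fin n → ZMod 2) ℂ) : Matrix (Fin n → ZMod 2) (Fin n → ZMod 2) ℂ)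
      = ↑g⁻¹ * (↑g * pMat σ⁻¹) := by rw [h1, mul_one]
    _ = ((g⁻¹ * g : GL (Fin n → ZMod 2) ℂ) : Matrix (Fin n → ZMod 2) (Fin n → ZMod 2) ℂ)
        * pMat σ⁻¹ := by rw [Units.val_mul, mul_assoc]
    _ = pMat σ⁻¹ := by rw [inv_mul_cancel, Units.val_one, one_mul]

/-- The subgroup of all permutation matrices. -/
def permMatGL (n : ℕ) : Subgroup (GL (Fin n → ZMod 2) ℂ) where
  carrier := {g | ∃ σ : Equiv.Perm (Fin n → ZMod 2),
    (g : Matrix (Fin n → ZMod 2) (Fin n → ZMod 2) ℂ) = pMat σ}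
  one_mem' := ⟨1, by rw [pMat_one]; rfl⟩
  mul_mem' := by
    rintro a b ⟨σ, hσ⟩ ⟨τ, hτ⟩
    exact ⟨σ * τ, by rw [Units.val_mul, hσ, hτ, pMat_mul]⟩
  inv_mem' := by
    rintro g ⟨σ, hσ⟩
    exact ⟨σ⁻¹, val_inv_eq_pMat g σ hσ⟩

theorem perm_le_permMat (n : ℕ) : permGroup n ≤ permMatGL n := by
  rw [permGroup, Subgroup.closure_le]
  rintro g (⟨i, j, hij, hg⟩ | ⟨j, hg⟩)
  · exact ⟨(cnot_invol n i j hij).toPerm, by rw [hg, cnotMat_eq_pMat n i j hij]⟩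
  · exact ⟨(x_invol n j).toPerm, by rw [hg, xMat_eq_pMat]⟩

theorem perm_le_Gm (n m : ℕ) : permGroup n ≤ GmGroup n m :=
  Subgroup.closure_mono (by rintro g (h | h); exacts [Or.inl h, Or.inr (Or.inl h)])

theorem diag_perm_eq_one {n : ℕ} (g : GL (Fin n → ZMod 2) ℂ)
    (hd : g ∈ diagGL n) (hp : g ∈ permGroup n) : g = 1 := by
  obtain ⟨d, hdg⟩ := hd
  obtain ⟨σ, hσ⟩ := perm_le_permMat n hp
  have hfix : ∀ c, σ c = c := by
    intro c
    by_contra hne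
    have h2 := congrArg (fun M : Matrix (Fin n → ZMod 2) (Fin n → ZMod 2) ℂ => M (σ c) c)
      (hdg.symm.trans hσ)
    simp [pMat, Matrix.diagonal_apply_ne _ hne] at h2
  have hσ1 : σ = 1 := Equiv.ext hfix
  apply Units.ext
  rw [hσ, hσ1, pMat_one, Units.val_one]

theorem Wm_mem_iff {n m : ℕ} (g : GL (Fin n → ZMod 2) ℂ) :
    g ∈ WmGroup n m ↔ g ∈ diagGL n ∧ g ∈ GmGroup n m := Subgroup.mem_inf

theorem conj_mem_diag {n : ℕ} (p w : GL (Fin n → ZMod 2) ℂ)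
    (hp : p ∈ permMatGL n) (hw : w ∈ diagGL n) : p * w * p⁻¹ ∈ diagGL n := by
  obtain ⟨σ, hσ⟩ := hp
  obtain ⟨d, hd⟩ := hw
  refine ⟨d ∘ σ.symm, ?_⟩
  rw [Units.val_mul, Units.val_mul, hσ, hd, val_inv_eq_pMat p σ hσ, pMat_mul_diag,
    mul_assoc, pMat_mul, mul_inv_cancel, pMat_one, mul_one]

theorem conj_mem_Wm {n m : ℕ} (p w : GL (Fin n → ZMod 2) ℂ)
    (hp : p ∈ permGroup n) (hw : w ∈ WmGroup n m) : p * w * p⁻¹ ∈ WmGroup n m := by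
  rw [Wm_mem_iff] at hw ⊢
  exact ⟨conj_mem_diag p w (perm_le_permMat n hp) hw.1,
    mul_mem (mul_mem (perm_le_Gm n m hp) hw.2) (inv_mem (perm_le_Gm n m hp))⟩

/-- The product set `Π ⬝ W_m` as a subgroup. -/
def PW (n m : ℕ) : Subgroup (GL (Fin n → ZMod 2) ℂ) where
  carrier := {g | ∃ p ∈ permGroup n, ∃ w ∈ WmGroup n m, g = p * w}
  one_mem' := ⟨1, one_mem _, 1, one_mem _, (mul_one 1).symm⟩
  mul_mem' := by
    rintro a b ⟨p1, hp1, w1, hw1, rfl⟩ ⟨p2, hp2, w2, hw2, rfl⟩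
    refine ⟨p1 * p2, mul_mem hp1 hp2, (p2⁻¹ * w1 * p2⁻¹⁻¹) * w2,
      mul_mem (conj_mem_Wm p2⁻¹ w1 (inv_mem hp2) hw1) hw2, ?_⟩
    group
  inv_mem' := by
    rintro g ⟨p, hp, w, hw, rfl⟩
    refine ⟨p⁻¹, inv_mem hp, p * w⁻¹ * p⁻¹, conj_mem_Wm p w⁻¹ hp (inv_mem hw), ?_⟩
    group

theorem Gm_le_PW (n m : ℕ) : GmGroup n m ≤ PW n m := by
  rw [GmGroup, Subgroup.closure_le]
  rintro g (h | h | ⟨j, hg⟩)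
  · exact ⟨g, Subgroup.subset_closure (Or.inl h), 1, one_mem _, (mul_one g).symm⟩
  · exact ⟨g, Subgroup.subset_closure (Or.inr h), 1, one_mem _, (mul_one g).symm⟩
  · refine ⟨1, one_mem _, g, ?_, (one_mul g).symm⟩
    rw [Wm_mem_iff]
    exact ⟨⟨_, hg⟩, Subgroup.subset_closure (Or.inr (Or.inr ⟨j, hg⟩))⟩

end GmAux

namespace GmAux

/-- Conjugation action of `Π` on `W_m`. -/
def phi (n m : ℕ) : permGroup n →* MulAut (WmGroup n m) where
  toFun p :=
    { toFun := fun w => ⟨(p : GL (Fin n → ZMod 2) ℂ) * w * (p : GL (Fin n → ZMod 2) ℂ)⁻¹,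
        conj_mem_Wm _ _ p.2 w.2⟩
      invFun := fun w => ⟨(p : GL (Fin n → ZMod 2) ℂ)⁻¹ * w * ((p : GL (Fin n → ZMod 2) ℂ)⁻¹)⁻¹,
        conj_mem_Wm _ _ (inv_mem p.2) w.2⟩
      left_inv := fun w => Subtype.ext (by simp [mul_assoc])
      right_inv := fun w => Subtype.ext (by simp [mul_assoc])
      map_mul' := fun a b => Subtype.ext (by
        simp only [Subgroup.coe_mul]
        group) }
  map_one' := by
    ext w
    simp
  map_mul' p q := by
    ext w
    simp only [MulAut.mul_apply, MulEquiv.coe_mk, Equiv.coe_fn_mk, Subgroup.coe_mul,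
      mul_inv_rev]
    group

/-- The homomorphism from the semidirect product to `GL`. -/
def F (n m : ℕ) : SemidirectProduct (WmGroup n m) (permGroup n) (phi n m) →*
    GL (Fin n → ZMod 2) ℂ :=
  SemidirectProduct.lift (WmGroup n m).subtype (permGroup n).subtype
    (fun p => by
      ext w
      rfl)

theorem F_apply (n m : ℕ) (x) : F n m x = (x.left : GL (Fin n → ZMod 2) ℂ) * x.right := rfl

theorem F_injective (n m : ℕ) : Function.Injective (F n m) := by
  rw [injective_iff_map_eq_one]
  intro x hx
  rw [F_apply] at hx
  have hpw : (x.right : GL (Fin n → ZMod 2) ℂ) = (x.left : GL (Fin n → ZMod 2) ℂ)⁻¹ :=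
    eq_inv_of_mul_eq_one_right hx
  have hpd : (x.right : GL (Fin n → ZMod 2) ℂ) ∈ diagGL n := by
    rw [hpw]
    exact inv_mem ((Wm_mem_iff _).1 x.left.2).1
  have hp1 : (x.right : GL (Fin n → ZMod 2) ℂ) = 1 :=
    diag_perm_eq_one _ hpd x.right.2
  have hw1 : (x.left : GL (Fin n → ZMod 2) ℂ) = 1 := by
    rw [hp1, mul_one] at hx
    exact hx
  exact SemidirectProduct.ext (Subtype.ext hw1) (Subtype.ext hp1)

theorem F_range (n m : ℕ) : (F n m).range = GmGroup n m := by
  apply le_antisymm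
  · rintro g ⟨x, rfl⟩
    rw [F_apply]
    exact mul_mem ((Wm_mem_iff _).1 x.left.2).2 (perm_le_Gm n m x.right.2)
  · intro g hg
    obtain ⟨p, hp, w, hw, rfl⟩ := Gm_le_PW n m hg
    refine ⟨⟨⟨p * w * p⁻¹, conj_mem_Wm p w hp hw⟩, ⟨p, hp⟩⟩, ?_⟩
    rw [F_apply]
    show p * w * p⁻¹ * p = p * w
    group

end GmAux

namespace GmAux

theorem diag_comm {n : ℕ} (v w : GL (Fin n → ZMod 2) ℂ)
    (hv : v ∈ diagGL n) (hw : w ∈ diagGL n) : v * w = w * v := by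
  obtain ⟨d, hd⟩ := hv
  obtain ⟨e, he⟩ := hw
  apply Units.ext
  rw [Units.val_mul, Units.val_mul, hd, he, Matrix.diagonal_mul_diagonal,
    Matrix.diagonal_mul_diagonal]
  simp only [mul_comm]

end GmAux
/-- Lemma 1 (semidirect-product structure of the CNOT-dihedral group): in the
group `G_m` generated by CNOT, `X`, and `Z_m` gates on `n` qubits, the subgroup
`W_m` of diagonal matrices and the subgroup `Π` of permutation matrices satisfy
`W_m ∩ Π = {I}`, `G_m = Π·W_m`, and `W_m ◁ G_m`; hence `G_m ≅ W_m ⋊ Π`.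
(Global phase factors `⟨ω_m⟩` are diagonal, hence absorbed into `W_m`.) -/
theorem Gm_semidirect (n m : ℕ) (hm : 0 < m) :
    (WmGroup n m ⊓ permGroup n = ⊥) ∧
    (∀ g ∈ GmGroup n m, ∃ p ∈ permGroup n, ∃ w ∈ WmGroup n m, g = p * w) ∧
    (∀ g ∈ GmGroup n m, ∀ w ∈ WmGroup n m, g * w * g⁻¹ ∈ WmGroup n m) ∧
    (∃ φ : permGroup n →* MulAut (WmGroup n m),
      Nonempty (GmGroup n m ≃* SemidirectProduct (WmGroup n m) (permGroup n) φ)) := by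

  open GmAux in
  refine ⟨?_, ?_, ?_, ?_⟩
  · rw [eq_bot_iff]
    intro g hg
    rw [Subgroup.mem_inf] at hg
    exact Subgroup.mem_bot.2 (diag_perm_eq_one g ((Wm_mem_iff g).1 hg.1).1 hg.2)
  · intro g hg
    exact Gm_le_PW n m hg
  · intro g hg w hw
    obtain ⟨p, hp, v, hv, rfl⟩ := Gm_le_PW n m hg
    have h1 : v * w * v⁻¹ = w := by
      rw [diag_comm v w ((Wm_mem_iff v).1 hv).1 ((Wm_mem_iff w).1 hw).1]
      group
    have h2 : p * v * w * (p * v)⁻¹ = p * (v * w * v⁻¹) * p⁻¹ := by group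
    rw [h2, h1]
    exact conj_mem_Wm p w hp hw
  · exact ⟨phi n m, ⟨((MonoidHom.ofInjective (F_injective n m)).trans
      (MulEquiv.subgroupCongr (F_range n m))).symm⟩⟩
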